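/- Let L ∈ ℕ, γ > 0, and let ω: Λ_L* → ℝ satisfy ω(k) > 0 for all k ∈ Λ_L*. Define the collision operator C̄[f](k) := γ (L^{−1} Σ_{q∈Λ_L*} f(q) − f(k)) for f: Λ_L* → ℂ. Suppose 𝓗, 𝓘, 𝓟, 𝓠: Λ_L* → ℂ satisfy the stationarity equations: (i) C̄[𝓗 − 𝓟](k) = 0 for all k; (ii) −γ 𝓘(k) = 0 for all k; (iii) −γ 𝓟(k) + 2i ω(k) 𝓠(k) + γ L^{−1} Σ_{q∈Λ_L*} 𝓟(q) − C̄[𝓗](k) = 0 for all k; and (iv) 2i ω(k) 𝓟(k) − γ 𝓠(k) = 0 for all k. Then 𝓘 ≡ 0, 𝓟 ≡ 0, 𝓠 ≡ 0, and there exists a constant E ∈ ℂ with 𝓗(k) = E for all k ∈ Λ_L*. -/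

import Mathlib

open Complex

/-- The discrete circle of `L` sites, represented by integers:
`{−(L−1)/2, …, (L−1)/2}` for odd `L` and `{−L/2+1, …, L/2}` for even `L`.
The dual lattice `Λ_L*` is identified with `Λ_L` via `k ↦ k/L`. -/
noncomputable def Lambda (L : ℕ) : Finset ℤ := Finset.Ioc ((L : ℤ) / 2 - L) ((L : ℤ) / 2)

/-- The collision operator `C̄[f](k) = γ (L⁻¹ Σ_{q∈Λ_L*} f(q) − f(k))`, with the dual
lattice indexed by `Λ_L`. -/
noncomputable def collision (L : ℕ) (γ : ℝ) (f : ℤ → ℂ) (k : ℤ) : ℂ :=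
  (γ : ℂ) * ((L : ℂ)⁻¹ * ∑ q ∈ Lambda L, f q - f k)

/-- The only stationary solutions of the homogeneous kinetic system are
`𝓘 = 𝓟 = 𝓠 = 0` and `𝓗` constant. -/
theorem stationary_solutions_of_kinetic_system
    (L : ℕ) (hL : 0 < L) (γ : ℝ) (hγ : 0 < γ)
    (ω : ℤ → ℝ) (hω : ∀ k ∈ Lambda L, 0 < ω k)
    (H I P Q : ℤ → ℂ)
    (h1 : ∀ k ∈ Lambda L, collision L γ (fun q => H q - P q) k = 0)
    (h2 : ∀ k ∈ Lambda L, -(γ : ℂ) * I k = 0)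
    (h3 : ∀ k ∈ Lambda L,
      -(γ : ℂ) * P k + 2 * Complex.I * (ω k : ℂ) * Q k
        + (γ : ℂ) * ((L : ℂ)⁻¹ * ∑ q ∈ Lambda L, P q) - collision L γ H k = 0)
    (h4 : ∀ k ∈ Lambda L,
      2 * Complex.I * (ω k : ℂ) * P k - (γ : ℂ) * Q k = 0) :
    (∀ k ∈ Lambda L, I k = 0 ∧ P k = 0 ∧ Q k = 0) ∧
    ∃ E : ℂ, ∀ k ∈ Lambda L, H k = E := by
  have hγ' : (γ : ℂ) ≠ 0 := Complex.ofReal_ne_zero.mpr hγ.ne'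
  have hPQ : ∀ k ∈ Lambda L, P k = 0 ∧ Q k = 0 := by
    intro k hk
    have e1 := h1 k hk
    have e3 := h3 k hk
    have e4 := h4 k hk
    simp only [collision, Finset.sum_sub_distrib] at e1 e3
    have hω' : ((ω k : ℂ)) ≠ 0 := Complex.ofReal_ne_zero.mpr (hω k hk).ne'
    have h2i : (2 : ℂ) * Complex.I * (ω k : ℂ) ≠ 0 := by
      simp [Complex.I_ne_zero, hω']
    have hQ : Q k = 0 := by
      have h0 : (2 : ℂ) * Complex.I * (ω k : ℂ) * Q k = 0 := by
        linear_combination e3 + e1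
      exact (mul_eq_zero.mp h0).resolve_left h2i
    have hP : P k = 0 := by
      have h0 : (2 : ℂ) * Complex.I * (ω k : ℂ) * P k = 0 := by
        linear_combination e4 + (γ : ℂ) * hQ
      exact (mul_eq_zero.mp h0).resolve_left h2i
    exact ⟨hP, hQ⟩
  have hS : ∑ q ∈ Lambda L, P q = 0 :=
    Finset.sum_eq_zero fun q hq => (hPQ q hq).1
  constructor
  · intro k hk
    have hI : I k = 0 := by
      have := h2 k hk
      have h0 : (γ : ℂ) * I k = 0 := by linear_combination -this
      exact (mul_eq_zero.mp h0).resolve_left hγ'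
    exact ⟨hI, (hPQ k hk).1, (hPQ k hk).2⟩
  · refine ⟨(L : ℂ)⁻¹ * ∑ q ∈ Lambda L, H q, fun k hk => ?_⟩
    have e1 := h1 k hk
    simp only [collision, Finset.sum_sub_distrib] at e1
    have h0 := (mul_eq_zero.mp e1).resolve_left hγ'
    have hPk : P k = 0 := (hPQ k hk).1
    linear_combination -h0 + hPk - (L : ℂ)⁻¹ * hS
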